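/- Let R be a commutative ring. Every τ_q-flat R-module is w-flat if and only if R is a WQ-ring, i.e., if and only if every finitely generated semi-regular ideal of R is a GV-ideal. -/

import Mathlib

open Polynomial TensorProduct

universe u v

/-- An ideal is *semi-regular* if it contains a finitely generated dense subideal
(an ideal is *dense* if its annihilator is zero). -/
def Ideal.IsSemiregular {R : Type*} [CommRing R] (I : Ideal R) : Prop :=
  ∃ J : Ideal R, J ≤ I ∧ J.FG ∧ Submodule.annihilator J = ⊥

/-- A module is *Q-torsion* if every element is annihilated by some finitely
generated semi-regular ideal. -/
def IsQTorsion (R : Type*) (M : Type*) [CommRing R] [AddCommGroup M] [Module R M] : Prop :=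
  ∀ m : M, ∃ I : Ideal R, I.FG ∧ I.IsSemiregular ∧ ∀ a ∈ I, a • m = 0

open CategoryTheory in
/-- `Tor_1^R(M, N)` as an `R`-module. -/
noncomputable def Tor1Mod (R : Type u) [CommRing R] (M N : Type u)
    [AddCommGroup M] [Module R M] [AddCommGroup N] [Module R N] : ModuleCat R :=
  ((Tor (ModuleCat.{u} R) 1).obj (ModuleCat.of R M)).obj (ModuleCat.of R N)

/-- A module is *τ_q-flat* if `Tor_1^R(M, N)` is Q-torsion for every module `N`. -/
def IsTauQFlat (R : Type u) [CommRing R] (M : Type u) [AddCommGroup M] [Module R M] : Prop :=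
  ∀ (N : Type u) [AddCommGroup N] [Module R N], IsQTorsion R (Tor1Mod R M N)

/-- A *GV-ideal* is a finitely generated ideal `J` such that the natural map
`R → Hom_R(J, R)`, sending `r` to multiplication by `r`, is bijective. -/
def Ideal.IsGV {R : Type*} [CommRing R] (J : Ideal R) : Prop :=
  J.FG ∧ Function.Bijective (fun r : R => (r • J.subtype : J →ₗ[R] R))

/-- A module is *GV-torsion* if every element is annihilated by some GV-ideal. -/
def IsGVTorsion (R : Type*) (M : Type*) [CommRing R] [AddCommGroup M] [Module R M] : Prop :=
  ∀ m : M, ∃ J : Ideal R, J.IsGV ∧ ∀ a ∈ J, a • m = 0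

/-- A module is *w-flat* if `Tor_1^R(M, N)` is GV-torsion for every module `N`. -/
def IsWFlat (R : Type u) [CommRing R] (M : Type u) [AddCommGroup M] [Module R M] : Prop :=
  ∀ (N : Type u) [AddCommGroup N] [Module R N], IsGVTorsion R (Tor1Mod R M N)


section WQAux
open CategoryTheory
namespace WQAux

variable {R : Type u} [CommRing R]

namespace GVAux

lemma smul_subtype_apply (J : Ideal R) (r : R) (x : J) :
    (r • J.subtype : J →ₗ[R] R) x = r * x := by
  simp [smul_eq_mul]

lemma gv_ann {J : Ideal R} (h : J.IsGV) {r : R} (hr : ∀ a : J, r * a = 0) : r = 0 := by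
  have : (fun s : R => (s • J.subtype : J →ₗ[R] R)) r
      = (fun s : R => (s • J.subtype : J →ₗ[R] R)) 0 := by
    ext a
    simp only [smul_subtype_apply, zero_mul, zero_smul, LinearMap.zero_apply]
    exact hr a
  exact h.2.injective this

lemma gv_of_forall_eq {J : Ideal R} (h : J.IsGV) {r s : R}
    (hrs : ∀ a : J, r * a = s * a) : r = s :=
  sub_eq_zero.mp (gv_ann h (r := r - s) (fun a => by rw [sub_mul, hrs a, sub_self]))

lemma gv_top : (⊤ : Ideal R).IsGV := by
  constructor
  · exact ⟨{1}, by simp⟩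
  constructor
  · intro r s hrs
    have := congrArg (fun f : (⊤ : Ideal R) →ₗ[R] R => f ⟨1, trivial⟩) hrs
    simpa [smul_subtype_apply] using this
  · intro f
    refine ⟨f ⟨1, trivial⟩, ?_⟩
    ext ⟨a, ha⟩
    have h1 : (⟨a, ha⟩ : (⊤ : Ideal R)) = a • ⟨1, trivial⟩ := by
      ext; simp
    rw [smul_subtype_apply]
    conv_rhs => rw [h1, map_smul]
    simp [smul_eq_mul, mul_comm]

/-- multiplication into the product ideal, linear in the first variable -/
def mulRight {J₁ J₂ : Ideal R} (b : J₂) : J₁ →ₗ[R] ↥(J₁ * J₂) where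
  toFun a := ⟨a * b, Ideal.mul_mem_mul a.2 b.2⟩
  map_add' a a' := Subtype.ext (by push_cast; ring)
  map_smul' c a := Subtype.ext (by push_cast; simp [smul_eq_mul]; ring)

/-- multiplication into the product ideal, linear in the second variable -/
def mulLeft {J₁ J₂ : Ideal R} (a : J₁) : J₂ →ₗ[R] ↥(J₁ * J₂) where
  toFun b := ⟨a * b, Ideal.mul_mem_mul a.2 b.2⟩
  map_add' b b' := Subtype.ext (by push_cast; ring)
  map_smul' c b := Subtype.ext (by push_cast; simp [smul_eq_mul]; ring)

lemma gv_mul {J₁ J₂ : Ideal R} (h1 : J₁.IsGV) (h2 : J₂.IsGV) : (J₁ * J₂).IsGV := by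
  have hann : ∀ r : R, (∀ a : ↥(J₁ * J₂), r * a = 0) → r = 0 := by
    intro r hr
    refine gv_ann h2 (fun b => gv_ann h1 (fun a => ?_))
    rw [mul_assoc, mul_comm (b : R) (a : R)]
    exact hr ⟨a * b, Ideal.mul_mem_mul a.2 b.2⟩
  refine ⟨Submodule.FG.mul h1.1 h2.1, ?_, ?_⟩
  · intro r s hrs
    refine sub_eq_zero.mp (hann _ (fun a => ?_))
    have := congrArg (fun f : ↥(J₁*J₂) →ₗ[R] R => f a) hrs
    simp only [smul_subtype_apply] at this
    rw [sub_mul, this, sub_self]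
  · intro f
    have key : ∀ b : J₂, ∃ r : R, ∀ a : J₁, f (mulRight b a) = r * a := by
      intro b
      obtain ⟨r, hr⟩ := h1.2.surjective (f.comp (mulRight b))
      exact ⟨r, fun a => by
        have := congrArg (fun g : (J₁ : Ideal R) →ₗ[R] R => g a) hr
        simp only [smul_subtype_apply, LinearMap.comp_apply] at this
        exact this.symm⟩
    choose rb hrb using key
    have hmm : ∀ (a : J₁) (b : J₂), mulRight (J₁ := J₁) b a = mulLeft a b := fun a b => rfl
    obtain ⟨s, hs⟩ := h2.2.surjective
      { toFun := rb
        map_add' := fun b b' => by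
          refine gv_of_forall_eq h1 (fun a => ?_)
          rw [mul_comm _ (a : R), mul_comm _ (a : R)]
          have h3 := hrb (b + b') a
          have h4 := hrb b a
          have h5 := hrb b' a
          rw [hmm, map_add, map_add, ← hmm, ← hmm, h4, h5] at h3
          rw [mul_comm (rb (b+b')) (a : R)] at h3
          rw [← h3]; ring
        map_smul' := fun c b => by
          refine gv_of_forall_eq h1 (fun a => ?_)
          simp only [RingHom.id_apply, smul_eq_mul]
          rw [mul_comm _ (a : R), mul_comm _ (a : R)]
          have h3 := hrb (c • b) a
          have h4 := hrb b a
          have h5 : mulRight (J₁ := J₁) (c • b) a = c • mulRight (J₁ := J₁) b a := by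
            rw [hmm, map_smul, hmm]
          rw [h5, map_smul, smul_eq_mul, h4] at h3
          rw [mul_comm (rb (c • b)) (a : R)] at h3
          rw [← h3]; ring }
    have hsb : ∀ b : J₂, rb b = s * b := by
      intro b
      have := congrArg (fun g : (J₂ : Ideal R) →ₗ[R] R => g b) hs
      simp only [smul_subtype_apply, LinearMap.coe_mk, AddHom.coe_mk] at this
      exact this.symm
    refine ⟨s, ?_⟩
    ext ⟨z, hz⟩
    rw [smul_subtype_apply]
    induction hz using Submodule.mul_induction_on' with
    | mem_mul_mem a ha b hb =>
      have h6 : f ⟨a * b, Ideal.mul_mem_mul ha hb⟩ = rb ⟨b, hb⟩ * a :=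
        hrb ⟨b, hb⟩ ⟨a, ha⟩
      rw [h6, hsb]
      push_cast; ring
    | add x hx y hy ihx ihy =>
      have hxy : (⟨x + y, add_mem hx hy⟩ : ↥(J₁*J₂)) = ⟨x, hx⟩ + ⟨y, hy⟩ := rfl
      rw [hxy, map_add, Submodule.coe_add, mul_add, ihx, ihy]

lemma gv_of_le {J I : Ideal R} (h : J.IsGV) (hJI : J ≤ I) (hI : I.FG) : I.IsGV := by
  refine ⟨hI, ?_, ?_⟩
  · intro r s hrs
    refine gv_of_forall_eq h (fun a => ?_)
    have := congrArg (fun f : (I : Ideal R) →ₗ[R] R => f ⟨a, hJI a.2⟩) hrs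
    simpa [smul_subtype_apply] using this
  · intro f
    obtain ⟨r, hr⟩ := h.2.surjective (f.comp (Submodule.inclusion hJI))
    have hr' : ∀ b : J, f (Submodule.inclusion hJI b) = r * b := by
      intro b
      have := congrArg (fun g : (J : Ideal R) →ₗ[R] R => g b) hr
      simp only [smul_subtype_apply, LinearMap.comp_apply] at this
      exact this.symm
    refine ⟨r, ?_⟩
    ext x
    rw [smul_subtype_apply]
    refine gv_of_forall_eq h (fun a => ?_)
    have hax : ((a : R) * x : R) ∈ J := Ideal.mul_mem_right _ _ a.2
    have h7 : ((a : R) • x : I) = Submodule.inclusion hJI ⟨(a : R) * x, hax⟩ := rfl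
    calc (r * x) * a = r * ((a:R) * x) := by ring
      _ = f (Submodule.inclusion hJI ⟨(a : R) * x, hax⟩) := (hr' ⟨_, hax⟩).symm
      _ = f ((a : R) • x) := by rw [← h7]
      _ = (a : R) * f x := by rw [map_smul, smul_eq_mul]
      _ = f x * a := by ring

lemma gv_pow {J : Ideal R} (h : J.IsGV) (k : ℕ) : (J ^ k).IsGV := by
  induction k with
  | zero => rw [pow_zero, Ideal.one_eq_top]; exact gv_top
  | succ n ih => rw [pow_succ]; exact gv_mul ih h

end GVAux


open GVAux

lemma radical_step {I : Ideal R} (hI : I.FG)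
    (hdense : ∀ r : R, (∀ x : I, r * x = 0) → r = 0)
    {a : R} (ha : ∀ x : I, a * (x : R) ∈ I * I) : a ∈ I.radical := by
  have : Module.Finite R ↥I := Module.Finite.iff_fg.mpr hI
  have hrange : LinearMap.range (a • (LinearMap.id : Module.End R ↥I)) ≤ I • ⊤ := by
    rintro y ⟨x, rfl⟩
    rw [Submodule.mem_smul_top_iff, Ideal.smul_eq_mul]
    have : ((a • (LinearMap.id : Module.End R ↥I)) x : R) = a * x := by
      simp [smul_eq_mul]
    rw [this]
    exact ha x
  obtain ⟨p, hmonic, -, hcoeff, heval⟩ :=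
    LinearMap.exists_monic_and_coeff_mem_pow_and_aeval_eq_zero_of_range_le_smul R
      (a • (LinearMap.id : Module.End R ↥I)) I hrange
  have hsm : (a • (LinearMap.id : Module.End R ↥I)) = algebraMap R (Module.End R ↥I) a := by
    rw [Algebra.algebraMap_eq_smul_one]
    rfl
  rw [hsm] at heval
  have heval' : Polynomial.eval a p = 0 := by
    refine hdense _ (fun x => ?_)
    have h2 : Polynomial.aeval ((algebraMap R (Module.End R ↥I)) a) p
        = algebraMap R (Module.End R ↥I) (Polynomial.aeval a p) :=
      Polynomial.aeval_algebraMap_apply _ a p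
    rw [heval] at h2
    have h3 := congrArg (fun g : Module.End R ↥I => (g x : R)) h2
    simp only [LinearMap.zero_apply, Algebra.algebraMap_eq_smul_one] at h3
    have h4 : ((Polynomial.aeval a p • (1 : Module.End R ↥I)) x : R)
        = Polynomial.aeval a p * (x : R) := by simp [smul_eq_mul]
    rw [h4] at h3
    rw [Polynomial.coe_aeval_eq_eval] at h3
    exact h3.symm
  set n := p.natDegree with hn
  refine ⟨n, ?_⟩
  have hsum := Polynomial.eval_eq_sum_range (p := p) a
  rw [heval', Finset.sum_range_succ, hmonic.coeff_natDegree, one_mul] at hsum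
  have : a ^ n = -∑ i ∈ Finset.range n, p.coeff i * a ^ i := by
    rw [eq_neg_iff_add_eq_zero, add_comm]
    exact hsum.symm
  rw [this]
  refine neg_mem (Ideal.sum_mem _ (fun i hi => ?_))
  have hin : p.coeff i ∈ I := by
    refine Ideal.pow_le_self ?_ (hcoeff i)
    have := Finset.mem_range.mp hi
    omega
  exact Ideal.mul_mem_right _ _ hin


lemma final_alg {I : Ideal R} (hfg : I.FG)
    (hdense : ∀ r : R, (∀ x : I, r * x = 0) → r = 0)
    (htor : ∀ x ∈ I, ∃ J : Ideal R, J.IsGV ∧ ∀ a ∈ J, a * x ∈ I * I) :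
    I.IsGV := by
  classical
  obtain ⟨s, hs⟩ := hfg
  choose Jx hJxGV hJx using htor
  have hmem : ∀ x ∈ s, (x : R) ∈ I := fun x hx => hs ▸ Ideal.subset_span hx
  set J : Ideal R := ∏ x ∈ s.attach, Jx x (hmem x x.2) with hJ
  have hJGV : J.IsGV := by
    refine Finset.prod_induction _ Ideal.IsGV (fun _ _ => gv_mul) (by rw [Ideal.one_eq_top]; exact gv_top) ?_
    exact fun x _ => hJxGV _ _
  have hJle : ∀ y : {x // x ∈ s}, J ≤ Jx y (hmem y y.2) := by
    intro y
    rw [hJ, ← Finset.mul_prod_erase s.attach _ (Finset.mem_attach s y)]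
    exact Ideal.mul_le_left
  have hJrad : J ≤ I.radical := by
    intro a haJ
    refine radical_step ⟨s, hs⟩ hdense (fun x => ?_)
    have hIle : I ≤ Submodule.comap (LinearMap.lsmul R R a) (I * I) := by
      conv_lhs => rw [← hs]
      rw [Ideal.span_le]
      intro y hy
      simp only [SetLike.mem_coe, Submodule.mem_comap, LinearMap.lsmul_apply, smul_eq_mul]
      exact hJx y (hmem y hy) a (hJle ⟨y, hy⟩ haJ)
    have := hIle x.2
    simpa only [Submodule.mem_comap, LinearMap.lsmul_apply, smul_eq_mul] using this
  obtain ⟨k, hk⟩ := Ideal.exists_pow_le_of_le_radical_of_fg hJrad hJGV.1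
  exact gv_of_le (gv_pow hJGV k) hk ⟨s, hs⟩


noncomputable section TorAux

variable (M N : Type u) [AddCommGroup M] [Module R M] [AddCommGroup N] [Module R N]

abbrev Fmod : ModuleCat.{u} R ⥤ ModuleCat.{u} R :=
  (MonoidalCategory.tensoringLeft (ModuleCat.{u} R)).obj (ModuleCat.of R M)

variable (P : ProjectiveResolution (ModuleCat.of R N))

abbrev Kcx : HomologicalComplex (ModuleCat.{u} R) (ComplexShape.down ℕ) :=
  ((Fmod (R := R) M).mapHomologicalComplex _).obj P.complex

abbrev Scx : ShortComplex (ModuleCat.{u} R) := (Kcx M N P).sc' 2 1 0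

def torIso : Tor1Mod R M N ≅ (Scx M N P).moduleCatLeftHomologyData.H :=
  P.isoLeftDerivedObj (Fmod (R := R) M) 1 ≪≫
    HomologicalComplex.homologyIsoSc' (Kcx M N P) 2 1 0 (by simp) (by simp) ≪≫
    ShortComplex.moduleCatHomologyIso _

-- carrier checks
example (v : (Scx M N P).X₂) : TensorProduct R M ↥(P.complex.X 1) := v
example (m : M) (p : ↥(P.complex.X 1)) : ↑(Scx M N P).X₂ := (m ⊗ₜ p : TensorProduct R M _)
example (w : (Scx M N P).X₁) : TensorProduct R M ↥(P.complex.X 2) := w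
example : ↥(ModuleCat.of R (R ⧸ (⊥ : Ideal R))) = (R ⧸ (⊥ : Ideal R)) := rfl

-- map identification
example (f : P.complex.X 1 ⟶ P.complex.X 0) (m : M) (p : ↥(P.complex.X 1)) :
    ((Fmod (R:=R) M).map f) (m ⊗ₜ p) = m ⊗ₜ (f p) := rfl

example : (Scx M N P).g = (Fmod (R:=R) M).map (P.complex.d 1 0) := by
  simp [Scx, Kcx]; rfl

example : (Scx M N P).f = (Fmod (R:=R) M).map (P.complex.d 2 1) := by
  simp [Scx, Kcx]; rfl

-- F1: if a kills M, a kills Tor1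
lemma tor_smul_zero (a : R) (ha : ∀ m : M, a • m = 0) (t : Tor1Mod R M N) :
    a • t = 0 := by
  obtain ⟨P⟩ := (HasProjectiveResolution.out (Z := ModuleCat.of R N))
  set e := torIso M N P
  have hX₂ : ∀ v : (Scx M N P).X₂, a • v = 0 := by
    intro v
    have : ∀ v : TensorProduct R M ↥(P.complex.X 1), a • v = 0 := by
      intro v
      induction v with
      | zero => simp
      | tmul m p => rw [TensorProduct.smul_tmul', ha m, TensorProduct.zero_tmul]
      | add v w ihv ihw => rw [smul_add, ihv, ihw, add_zero]
    exact this v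
  have hH : ∀ y : (Scx M N P).moduleCatLeftHomologyData.H, a • y = 0 := by
    intro y
    obtain ⟨ξ, rfl⟩ := Submodule.Quotient.mk_surjective _ y
    have h1 : a • ξ = 0 := Subtype.ext (hX₂ ξ)
    change a • (Submodule.Quotient.mk ξ : _ ⧸ (Scx M N P).moduleCatToCycles.range) = 0
    rw [← Submodule.Quotient.mk_smul, h1, Submodule.Quotient.mk_zero]
  have hinj : Function.Injective e.hom := (ModuleCat.mono_iff_injective e.hom).mp inferInstance
  apply hinj
  rw [map_smul, hH (e.hom t), map_zero]


lemma tor_extract (I : Ideal R) (Pgood : Ideal R → Prop)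
    (hGV : ∀ t : ↑(Tor1Mod R (R ⧸ I) (R ⧸ I)), ∃ J : Ideal R, Pgood J ∧ ∀ a ∈ J, a • t = 0)
    {x : R} (hx : x ∈ I) :
    ∃ J : Ideal R, Pgood J ∧ ∀ a ∈ J, a * x ∈ I * I := by
  obtain ⟨P⟩ := (HasProjectiveResolution.out (Z := ModuleCat.of R (R ⧸ I)))
  set e := torIso (R ⧸ I) (R ⧸ I) P with he
  -- identification of the degree-0 object of the single complex
  set u : ((ChainComplex.single₀ (ModuleCat R)).obj (ModuleCat.of R (R ⧸ I))).X 0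
      ≅ ModuleCat.of R (R ⧸ I) :=
    HomologicalComplex.singleObjXSelf (ComplexShape.down ℕ) 0 (ModuleCat.of R (R ⧸ I)) with hu
  set πN : P.complex.X 0 ⟶ ModuleCat.of R (R ⧸ I) := P.π.f 0 ≫ u.hom with hπN
  have hπNsurj : Function.Surjective πN := by
    rw [← ModuleCat.epi_iff_surjective]
    infer_instance
  haveI : Epi (ModuleCat.ofHom I.mkQ) := by
    rw [ModuleCat.epi_iff_surjective]
    exact Submodule.mkQ_surjective I
  set σ : P.complex.X 0 ⟶ ModuleCat.of R R :=
    Projective.factorThru πN (ModuleCat.ofHom I.mkQ) with hσ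
  set σf : ↥(P.complex.X 0) →ₗ[R] R := σ.hom with hσf
  have hσfac : ∀ z : ↑(P.complex.X 0), I.mkQ (σf z) = πN z := by
    intro z
    have := Projective.factorThru_comp πN (ModuleCat.ofHom I.mkQ)
    exact congrArg (fun f => f.hom z) this
  -- exactness at degree 0
  have hrk : LinearMap.range (P.complex.d 1 0).hom = LinearMap.ker (P.π.f 0).hom :=
    (ShortComplex.exact_of_g_is_cokernel
      (ShortComplex.mk (P.complex.d 1 0) (P.π.f 0) P.complex_d_comp_π_f_zero)
      P.isColimitCokernelCofork).moduleCat_range_eq_ker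
  -- ψ : P₁ → R,  p ↦ σ (d₁ p), lands in I
  set ψ : ↥(P.complex.X 1) →ₗ[R] R := σf.comp
    (P.complex.d 1 0).hom with hψ
  have hψI : ∀ p : ↥(P.complex.X 1), ψ p ∈ I := by
    intro p
    have h0 : P.π.f 0 (P.complex.d 1 0 p) = 0 := by
      have := P.complex_d_comp_π_f_zero
      exact congrArg (fun f => f.hom p) this
    have h1 : I.mkQ (ψ p) = 0 := by
      have h2 : ψ p = σf (P.complex.d 1 0 p) := rfl
      rw [h2, hσfac, hπN]
      show u.hom (P.π.f 0 (P.complex.d 1 0 p)) = 0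
      rw [h0, map_zero]
    rwa [Submodule.mkQ_apply, Submodule.Quotient.mk_eq_zero] at h1
  -- the map φ : (R/I) ⊗ P₁ → R/(I*I)
  set g0 : R →ₗ[R] (↥(P.complex.X 1) →ₗ[R] (R ⧸ (I * I))) :=
    { toFun := fun r => (I * I).mkQ.comp (r • ψ)
      map_add' := by intro r r'; ext p; simp [add_smul]
      map_smul' := by
        intro c r
        ext p
        simp only [LinearMap.comp_apply, LinearMap.smul_apply, Submodule.mkQ_apply,
          RingHom.id_apply]
        rw [← Submodule.Quotient.mk_smul]
        congr 1
        simp [smul_eq_mul, mul_assoc] } with hg0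
  have hg0ker : I ≤ LinearMap.ker g0 := by
    intro r hr
    rw [LinearMap.mem_ker]
    ext p
    rw [hg0]
    simp only [LinearMap.coe_mk, AddHom.coe_mk, LinearMap.comp_apply, LinearMap.smul_apply,
      Submodule.mkQ_apply, LinearMap.zero_apply, smul_eq_mul]
    rw [Submodule.Quotient.mk_eq_zero]
    exact Ideal.mul_mem_mul hr (hψI p)
  set f0 : (R ⧸ I) →ₗ[R] (↥(P.complex.X 1) →ₗ[R] (R ⧸ (I * I))) :=
    Submodule.liftQ I g0 hg0ker with hf0
  set φ : TensorProduct R (R ⧸ I) ↥(P.complex.X 1) →ₗ[R] (R ⧸ (I * I)) :=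
    TensorProduct.lift f0 with hφ
  -- produce the cycle
  obtain ⟨p₀, hp₀⟩ := hπNsurj (I.mkQ 1)
  have hxp₀ : πN (x • p₀) = 0 := by
    rw [map_smul, hp₀, Submodule.mkQ_apply, ← Submodule.Quotient.mk_smul,
      Submodule.Quotient.mk_eq_zero]
    simpa using hx
  have hker0 : P.π.f 0 (x • p₀) = 0 := by
    have hinj : Function.Injective u.hom := (ModuleCat.mono_iff_injective u.hom).mp inferInstance
    apply hinj
    rw [map_zero]
    exact hxp₀
  obtain ⟨p₁, hp₁⟩ : x • p₀ ∈ LinearMap.range (P.complex.d 1 0).hom := by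
    rw [hrk, LinearMap.mem_ker]
    exact hker0
  set S := Scx (R ⧸ I) (R ⧸ I) P with hS
  set ξ : TensorProduct R (R ⧸ I) ↥(P.complex.X 1) := (1 : R ⧸ I) ⊗ₜ p₁ with hξdef
  have hone : (1 : R ⧸ I) = I.mkQ 1 := rfl
  have hgξ : S.g ξ = 0 := by
    have h0 : S.g ξ = (1 : R ⧸ I) ⊗ₜ (P.complex.d 1 0 p₁) := rfl
    rw [h0, hp₁, TensorProduct.tmul_smul, TensorProduct.smul_tmul']
    have h1 : x • (1 : R ⧸ I) = 0 := by
      rw [hone, Submodule.mkQ_apply, ← Submodule.Quotient.mk_smul,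
        Submodule.Quotient.mk_eq_zero]
      simpa using hx
    rw [h1, TensorProduct.zero_tmul]
    rfl
  have hξmem : ξ ∈ LinearMap.ker S.g.hom := hgξ
  set t : ↑(Tor1Mod R (R ⧸ I) (R ⧸ I)) :=
    e.inv (Submodule.Quotient.mk ⟨ξ, hξmem⟩) with ht
  obtain ⟨J, hJ, hJt⟩ := hGV t
  refine ⟨J, hJ, fun a ha => ?_⟩
  -- the class of ξ is killed by a
  have hclass : a • (Submodule.Quotient.mk ⟨ξ, hξmem⟩ : S.moduleCatLeftHomologyData.H) = 0 := by
    have hinj : Function.Injective e.inv := (ModuleCat.mono_iff_injective e.inv).mp inferInstance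
    apply hinj
    erw [map_smul, map_zero]
    exact hJt a ha
  rw [← Submodule.Quotient.mk_smul, Submodule.Quotient.mk_eq_zero] at hclass
  obtain ⟨w, hw⟩ := hclass
  have hw' : S.f w = a • ξ := congrArg Subtype.val hw
  -- φ kills boundaries
  have hφSf : ∀ w : ↑S.X₁, φ (S.f w) = 0 := by
    intro w
    have : ∀ w : TensorProduct R (R ⧸ I) ↥(P.complex.X 2), φ (S.f w) = 0 := by
      intro w
      induction w with
      | zero => erw [map_zero]
      | tmul m q =>
        have h0 : S.f (m ⊗ₜ q) = m ⊗ₜ (P.complex.d 2 1 q) := rfl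
        rw [h0, hφ, TensorProduct.lift.tmul]
        obtain ⟨r, rfl⟩ := Submodule.mkQ_surjective I m
        rw [hf0, Submodule.mkQ_apply, Submodule.liftQ_apply]
        have h1 : P.complex.d 1 0 (P.complex.d 2 1 q) = 0 := by
          have := P.complex.d_comp_d 2 1 0
          exact congrArg (fun f => f.hom q) this
        have h2 : ψ (P.complex.d 2 1 q) = 0 := by
          have h3 : ψ (P.complex.d 2 1 q) = σf (P.complex.d 1 0 (P.complex.d 2 1 q)) := rfl
          rw [h3, h1, map_zero]
        rw [hg0]
        simp only [LinearMap.coe_mk, AddHom.coe_mk, LinearMap.comp_apply, LinearMap.smul_apply]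
        rw [h2, smul_zero, map_zero]
      | add v v' ihv ihv' => erw [map_add, map_add, ihv, ihv', add_zero]
    exact this w
  -- value of φ on ξ
  have hφξ : φ ξ = (I * I).mkQ (x * σf p₀) := by
    rw [hξdef, hφ, TensorProduct.lift.tmul, hone, Submodule.mkQ_apply, hf0,
      Submodule.liftQ_apply, hg0]
    simp only [LinearMap.coe_mk, AddHom.coe_mk, LinearMap.comp_apply, LinearMap.smul_apply]
    rw [one_smul]
    have h3 : ψ p₁ = σf (P.complex.d 1 0 p₁) := rfl
    rw [h3, hp₁, map_smul]
    rw [Submodule.mkQ_apply, Submodule.mkQ_apply]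
    congr 1
  have hmain : (I * I).mkQ (a * (x * σf p₀)) = 0 := by
    have h4 : φ (a • ξ) = 0 := by rw [← hw', hφSf w]
    rw [map_smul, hφξ] at h4
    rw [← h4, Submodule.mkQ_apply, Submodule.mkQ_apply, ← Submodule.Quotient.mk_smul]
    congr 1
  have h5 : a * (x * σf p₀) ∈ I * I := by
    rwa [Submodule.mkQ_apply, Submodule.Quotient.mk_eq_zero] at hmain
  have hσp₀ : σf p₀ - 1 ∈ I := by
    have h6 : I.mkQ (σf p₀) = I.mkQ 1 := by rw [hσfac p₀, hp₀]
    rw [Submodule.mkQ_apply, Submodule.mkQ_apply, Submodule.Quotient.eq] at h6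
    exact h6
  have h7 : a * (x * (σf p₀ - 1)) ∈ I * I :=
    Ideal.mul_mem_left _ _ (Ideal.mul_mem_mul hx hσp₀)
  have h8 : a * x = a * (x * σf p₀) - a * (x * (σf p₀ - 1)) := by ring
  rw [h8]
  exact sub_mem h5 h7


end TorAux

end WQAux

/-- Every τ_q-flat `R`-module is w-flat if and only if `R` is a WQ-ring, i.e. every
finitely generated semi-regular ideal of `R` is a GV-ideal. -/
theorem statement12 (R : Type u) [CommRing R] :
    (∀ (M : Type u) [AddCommGroup M] [Module R M], IsTauQFlat R M → IsWFlat R M) ↔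
      (∀ I : Ideal R, I.FG → I.IsSemiregular → I.IsGV) := by
  constructor
  · intro h I hfg hsr
    obtain ⟨J₀, hJ₀I, hJ₀fg, hann⟩ := hsr
    have hdense : ∀ r : R, (∀ x : I, r * (x : R) = 0) → r = 0 := by
      intro r hr
      have : r ∈ Submodule.annihilator J₀ := by
        rw [Submodule.mem_annihilator]
        intro n hn
        rw [smul_eq_mul]
        exact hr ⟨n, hJ₀I hn⟩
      rw [hann] at this
      simpa using this
    have htau : IsTauQFlat R (R ⧸ I) := by
      intro N _ _ t
      refine ⟨I, hfg, ⟨J₀, hJ₀I, hJ₀fg, hann⟩, fun a ha => ?_⟩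
      refine WQAux.tor_smul_zero (R ⧸ I) N a (fun m => ?_) t
      obtain ⟨r, rfl⟩ := Submodule.mkQ_surjective I m
      rw [Submodule.mkQ_apply, ← Submodule.Quotient.mk_smul, Submodule.Quotient.mk_eq_zero]
      rw [smul_eq_mul]
      exact Ideal.mul_mem_right r I ha
    have hw : IsWFlat R (R ⧸ I) := h (R ⧸ I) htau
    have hGVt := hw (R ⧸ I)
    refine WQAux.final_alg hfg hdense (fun x hx => ?_)
    exact WQAux.tor_extract I Ideal.IsGV hGVt hx
  · intro hq M _ _ hτ N _ _ t
    obtain ⟨I, hIfg, hIsr, hIkill⟩ := hτ N t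
    exact ⟨I, hq I hIfg hIsr, hIkill⟩
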